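/- Let b₀, b₁ : ℕ → ℝ satisfy: for i = 0,1 there exist constants 0 < c_{i,0} ≤ c_{i,1} < ∞ and exponents 0 ≤ λᵢ < ∞ with c_{i,0}(n+1)^{λᵢ} ≤ |bᵢ(n)| ≤ c_{i,1}(n+1)^{λᵢ} for all n ∈ ℕ, and suppose b₀(n) > 0 for all n while b₁ alternates in sign, i.e. (−1)ⁿ b₁(n) > 0 for all n. Then for every k ∈ ℕ the determinant b₀(k+1)b₁(k+2) − b₀(k+2)b₁(k+1) is nonzero, so the annihilator A exists and is unique, and A defines a bounded operator on ℓ²(ℕ,ℝ): there exists a constant C < ∞ such that ‖A x‖₂ ≤ C‖x‖₂ for every finitely supported sequence x : ℕ → ℝ. -/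

import Mathlib

/-- The action of an infinite matrix `A : ℕ → ℕ → ℝ` on a sequence `x : ℕ → ℝ`. -/
noncomputable def applyMat (A : ℕ → ℕ → ℝ) (x : ℕ → ℝ) : ℕ → ℝ :=
  fun i => ∑' j, A i j * x j

/-- The ℓ² norm of a real sequence. -/
noncomputable def l2norm (x : ℕ → ℝ) : ℝ :=
  Real.sqrt (∑' n, (x n) ^ 2)

/-- `A` is the annihilator of the pair of linear functionals `(b₀, b₁)`:
it is unit lower-triangular with lower bandwidth 2, and each column `k`
satisfies the two linear equations `bᵢ(k) + bᵢ(k+1)·A(k+1,k) + bᵢ(k+2)·A(k+2,k) = 0`. -/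
def IsAnnihilator (b₀ b₁ : ℕ → ℝ) (A : ℕ → ℕ → ℝ) : Prop :=
  (∀ k, A k k = 1) ∧
  (∀ i j, (i < j ∨ j + 2 < i) → A i j = 0) ∧
  (∀ k, b₀ k + b₀ (k + 1) * A (k + 1) k + b₀ (k + 2) * A (k + 2) k = 0 ∧
        b₁ k + b₁ (k + 1) * A (k + 1) k + b₁ (k + 2) * A (k + 2) k = 0)

private lemma tsum_sq_eq_sum (y : ℕ → ℝ) (N : ℕ) (h : ∀ n, N ≤ n → y n = 0) :
    ∑' n, (y n) ^ 2 = ∑ n ∈ Finset.range N, (y n) ^ 2 :=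
  tsum_eq_sum fun n hn => by rw [h n (by simpa using hn)]; ring

private lemma l2norm_eq_norm (y : ℕ → ℝ) (N : ℕ) (h : ∀ n, N ≤ n → y n = 0) :
    l2norm y = ‖(show EuclideanSpace ℝ (Fin N) from WithLp.toLp 2 fun i => y i)‖ := by
  rw [EuclideanSpace.norm_eq, l2norm, tsum_sq_eq_sum y N h]
  congr 1
  rw [← Fin.sum_univ_eq_sum_range fun n => (y n) ^ 2]
  simp [Real.norm_eq_abs, sq_abs]

private lemma l2norm_add_le (y z : ℕ → ℝ) (N : ℕ)
    (hy : ∀ n, N ≤ n → y n = 0) (hz : ∀ n, N ≤ n → z n = 0) :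
    l2norm (fun n => y n + z n) ≤ l2norm y + l2norm z := by
  rw [l2norm_eq_norm y N hy, l2norm_eq_norm z N hz,
      l2norm_eq_norm (fun n => y n + z n) N (fun n hn => by show y n + z n = 0; rw [hy n hn, hz n hn]; ring)]
  have := norm_add_le (WithLp.toLp 2 (fun i : Fin N => y i) : EuclideanSpace ℝ (Fin N)) (WithLp.toLp 2 fun i : Fin N => z i)
  rw [← WithLp.toLp_add] at this
  exact this

private noncomputable def shift1 (A : ℕ → ℕ → ℝ) (x : ℕ → ℝ) : ℕ → ℝ :=
  fun n => if n = 0 then 0 else A n (n - 1) * x (n - 1)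

private lemma l2norm_shift1_le (A : ℕ → ℕ → ℝ) (x : ℕ → ℝ) (M : ℝ) (hM : 0 ≤ M)
    (h : ∀ k, |A (k + 1) k| ≤ M) (N : ℕ) (hx : ∀ n, N ≤ n → x n = 0) :
    l2norm (shift1 A x) ≤ M * l2norm x := by
  have hvan : ∀ n, N + 1 ≤ n → shift1 A x n = 0 := by
    intro n hn
    have h0 : n ≠ 0 := by omega
    simp only [shift1, if_neg h0, hx (n-1) (by omega), mul_zero]
  rw [l2norm, l2norm, tsum_sq_eq_sum _ (N+1) hvan, tsum_sq_eq_sum x N hx,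
    Finset.sum_range_succ']
  have hterm : ∀ j ∈ Finset.range N, (shift1 A x (j+1))^2 ≤ M^2 * (x j)^2 := by
    intro j _
    simp only [shift1, Nat.add_sub_cancel, if_neg (Nat.succ_ne_zero j)]
    rw [mul_pow]
    apply mul_le_mul_of_nonneg_right _ (sq_nonneg _)
    calc (A (j+1) j)^2 = |A (j+1) j|^2 := (sq_abs _).symm
      _ ≤ M^2 := by apply pow_le_pow_left₀ (abs_nonneg _) (h j)
  calc Real.sqrt (∑ j ∈ Finset.range N, (shift1 A x (j+1))^2 + (shift1 A x 0)^2)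
      ≤ Real.sqrt (M^2 * ∑ j ∈ Finset.range N, (x j)^2) := by
        apply Real.sqrt_le_sqrt
        rw [Finset.mul_sum]
        have h0 : shift1 A x 0 = 0 := by simp [shift1]
        rw [h0]
        simpa using Finset.sum_le_sum hterm
    _ = M * Real.sqrt (∑ j ∈ Finset.range N, (x j)^2) := by
        rw [Real.sqrt_mul (sq_nonneg M), Real.sqrt_sq hM]

private lemma l2norm_pureShift (w : ℕ → ℝ) (N : ℕ) (h : ∀ n, N ≤ n → w n = 0) :
    l2norm (fun n => if n = 0 then 0 else w (n-1)) = l2norm w := by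
  unfold l2norm
  congr 1
  rw [tsum_sq_eq_sum _ (N+1) (fun n hn => by
      have h0 : n ≠ 0 := by omega
      simp [h0, h (n-1) (by omega)]),
    tsum_sq_eq_sum w N h, Finset.sum_range_succ']
  simp

private lemma rpow_three (lam : ℝ) (hlam : 0 ≤ lam) (k n : ℕ) (h : n ≤ k + 2) :
    ((n:ℝ)+1) ^ lam ≤ 3 ^ lam * ((k:ℝ)+1) ^ lam := by
  rw [← Real.mul_rpow (by norm_num) (by positivity)]
  apply Real.rpow_le_rpow (by positivity) _ hlam
  have hn : (n:ℝ) ≤ (k:ℝ) + 2 := by exact_mod_cast h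
  linarith

private lemma rpow_mono' (lam : ℝ) (hlam : 0 ≤ lam) (k n : ℕ) (h : k ≤ n) :
    ((k:ℝ)+1) ^ lam ≤ ((n:ℝ)+1) ^ lam := by
  apply Real.rpow_le_rpow (by positivity) _ hlam
  have : (k:ℝ) ≤ (n:ℝ) := by exact_mod_cast h
  linarith

theorem annihilator_exists_unique_and_bounded
    (b₀ b₁ : ℕ → ℝ)
    (c₀₀ c₀₁ c₁₀ c₁₁ : ℝ) (lam₀ lam₁ : ℝ)
    (hc₀₀ : 0 < c₀₀) (hc₀ : c₀₀ ≤ c₀₁) (hc₁₀ : 0 < c₁₀) (hc₁ : c₁₀ ≤ c₁₁)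
    (hlam₀ : 0 ≤ lam₀) (hlam₁ : 0 ≤ lam₁)
    (hb₀bound : ∀ n : ℕ, c₀₀ * ((n : ℝ) + 1) ^ lam₀ ≤ |b₀ n| ∧
                         |b₀ n| ≤ c₀₁ * ((n : ℝ) + 1) ^ lam₀)
    (hb₁bound : ∀ n : ℕ, c₁₀ * ((n : ℝ) + 1) ^ lam₁ ≤ |b₁ n| ∧
                         |b₁ n| ≤ c₁₁ * ((n : ℝ) + 1) ^ lam₁)
    (hb₀pos : ∀ n : ℕ, 0 < b₀ n)
    (hb₁alt : ∀ n : ℕ, 0 < (-1 : ℝ) ^ n * b₁ n) :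
    (∀ k : ℕ, b₀ (k + 1) * b₁ (k + 2) - b₀ (k + 2) * b₁ (k + 1) ≠ 0) ∧
    (∃! A : ℕ → ℕ → ℝ, IsAnnihilator b₀ b₁ A) ∧
    (∀ A : ℕ → ℕ → ℝ, IsAnnihilator b₀ b₁ A →
      ∃ C : ℝ, ∀ x : ℕ → ℝ, (Function.support x).Finite →
        l2norm (applyMat A x) ≤ C * l2norm x) := by
  set d : ℕ → ℝ := fun k => b₀ (k + 1) * b₁ (k + 2) - b₀ (k + 2) * b₁ (k + 1) with hd_def
  -- signs of b₁
  have hb1odd : ∀ n : ℕ, Odd n → b₁ n < 0 := by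
    intro n hn
    have h := hb₁alt n
    rw [hn.neg_one_pow] at h
    linarith
  have hb1even : ∀ n : ℕ, Even n → 0 < b₁ n := by
    intro n hn
    have h := hb₁alt n
    rw [hn.neg_one_pow] at h
    linarith
  -- |d k| ≥ |b₀ (k+1)| * |b₁ (k+2)|
  have habsd : ∀ k, |b₀ (k+1)| * |b₁ (k+2)| ≤ |d k| := by
    intro k
    rcases Nat.even_or_odd k with he | ho
    · have h1 : b₁ (k+1) < 0 := hb1odd _ (he.add_one)
      have h2 : 0 < b₁ (k+2) := hb1even _ (by rcases he with ⟨m, hm⟩; exact ⟨m+1, by omega⟩)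
      have hp1 := hb₀pos (k+1); have hp2 := hb₀pos (k+2)
      have hdk : 0 < d k := by rw [hd_def]; dsimp only; nlinarith
      rw [abs_of_pos hp1, abs_of_pos h2, abs_of_pos hdk, hd_def]
      dsimp only; nlinarith
    · have h1 : 0 < b₁ (k+1) := hb1even _ (ho.add_one)
      have h2 : b₁ (k+2) < 0 := hb1odd _ (by rcases ho with ⟨m, hm⟩; exact ⟨m+1, by omega⟩)
      have hp1 := hb₀pos (k+1); have hp2 := hb₀pos (k+2)
      have hdk : d k < 0 := by rw [hd_def]; dsimp only; nlinarith
      rw [abs_of_pos hp1, abs_of_neg h2, abs_of_neg hdk, hd_def]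
      dsimp only; nlinarith
  have hb₀ne : ∀ n, |b₀ n| ≠ 0 := fun n => ne_of_gt (abs_pos.mpr (ne_of_gt (hb₀pos n)))
  have hb₁ne : ∀ n, 0 < |b₁ n| := by
    intro n
    rcases Nat.even_or_odd n with he | ho
    · exact abs_pos.mpr (ne_of_gt (hb1even n he))
    · exact abs_pos.mpr (ne_of_lt (hb1odd n ho))
  have hdet : ∀ k, d k ≠ 0 := by
    intro k h
    have h1 : 0 < |b₀ (k+1)| * |b₁ (k+2)| :=
      mul_pos (abs_pos.mpr (ne_of_gt (hb₀pos (k+1)))) (hb₁ne (k+2))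
    have h2 := habsd k
    rw [h, abs_zero] at h2
    linarith
  -- entry formulas for any annihilator
  have hentry : ∀ A : ℕ → ℕ → ℝ, IsAnnihilator b₀ b₁ A → ∀ k,
      A (k+1) k = (b₀ (k+2) * b₁ k - b₀ k * b₁ (k+2)) / d k ∧
      A (k+2) k = (b₀ k * b₁ (k+1) - b₀ (k+1) * b₁ k) / d k := by
    intro A hA k
    obtain ⟨h0, h1⟩ := hA.2.2 k
    constructor
    · rw [eq_div_iff (hdet k), hd_def]
      linear_combination b₁ (k+2) * h0 - b₀ (k+2) * h1
    · rw [eq_div_iff (hdet k), hd_def]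
      linear_combination b₀ (k+1) * h1 - b₁ (k+1) * h0
  -- uniqueness
  have huniq : ∀ A B : ℕ → ℕ → ℝ, IsAnnihilator b₀ b₁ A → IsAnnihilator b₀ b₁ B → A = B := by
    intro A B hA hB
    funext i j
    rcases Nat.lt_or_ge i j with h | h
    · rw [hA.2.1 i j (Or.inl h), hB.2.1 i j (Or.inl h)]
    rcases Nat.lt_or_ge (j+2) i with h2 | h2
    · rw [hA.2.1 i j (Or.inr h2), hB.2.1 i j (Or.inr h2)]
    rcases (show i = j ∨ i = j + 1 ∨ i = j + 2 by omega) with h3 | h3 | h3 <;> rw [h3]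
    · rw [hA.1 j, hB.1 j]
    · rw [(hentry A hA j).1, (hentry B hB j).1]
    · rw [(hentry A hA j).2, (hentry B hB j).2]
  -- existence
  have hexists : IsAnnihilator b₀ b₁ (fun i j =>
      if i = j then 1
      else if i = j + 1 then (b₀ (j+2) * b₁ j - b₀ j * b₁ (j+2)) / d j
      else if i = j + 2 then (b₀ j * b₁ (j+1) - b₀ (j+1) * b₁ j) / d j
      else 0) := by
    refine ⟨fun k => if_pos rfl, ?_, ?_⟩
    · intro i j h
      have h1 : i ≠ j := by omega
      have h2 : i ≠ j + 1 := by omega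
      have h3 : i ≠ j + 2 := by omega
      simp [h1, h2, h3]
    · intro k
      have h1 : ¬ (k + 1 = k) := by omega
      have h2 : ¬ (k + 2 = k) := by omega
      have h3 : ¬ (k + 2 = k + 1) := by omega
      simp only [h1, h2, h3, if_false, if_pos rfl, if_true]
      have hD : b₀ (k + 1) * b₁ (k + 2) - b₀ (k + 2) * b₁ (k + 1) ≠ 0 := hdet k
      constructor
      · simp only [hd_def]
        field_simp
        ring
      · simp only [hd_def]
        rw [mul_div_assoc', mul_div_assoc', add_assoc, ← add_div, add_div' _ _ _ hD, div_eq_zero_iff]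
        left; ring
  -- the uniform entry bound
  set M : ℝ := 2 * c₀₁ * c₁₁ * (3:ℝ) ^ lam₀ * (3:ℝ) ^ lam₁ / (c₀₀ * c₁₀) with hM_def
  have h3l0 : (0:ℝ) < (3:ℝ) ^ lam₀ := Real.rpow_pos_of_pos (by norm_num) _
  have h3l1 : (0:ℝ) < (3:ℝ) ^ lam₁ := Real.rpow_pos_of_pos (by norm_num) _
  have hc₀₁ : 0 < c₀₁ := lt_of_lt_of_le hc₀₀ hc₀
  have hc₁₁ : 0 < c₁₁ := lt_of_lt_of_le hc₁₀ hc₁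
  have hM : 0 ≤ M := by rw [hM_def]; positivity
  have hbound : ∀ (k n₀ n₁ m₀ m₁ : ℕ), n₀ ≤ k+2 → n₁ ≤ k+2 → m₀ ≤ k+2 → m₁ ≤ k+2 →
      |b₀ n₀ * b₁ n₁ - b₀ m₀ * b₁ m₁| ≤ M * |d k| := by
    intro k n₀ n₁ m₀ m₁ hn₀ hn₁ hm₀ hm₁
    set P₀ : ℝ := ((k:ℝ)+1) ^ lam₀ with hP₀_def
    set P₁ : ℝ := ((k:ℝ)+1) ^ lam₁ with hP₁_def
    have hP₀ : 0 < P₀ := Real.rpow_pos_of_pos (by positivity) _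
    have hP₁ : 0 < P₁ := Real.rpow_pos_of_pos (by positivity) _
    have hub₀ : ∀ n : ℕ, n ≤ k + 2 → |b₀ n| ≤ c₀₁ * ((3:ℝ) ^ lam₀ * P₀) := by
      intro n hn
      refine (hb₀bound n).2.trans ?_
      exact mul_le_mul_of_nonneg_left (rpow_three lam₀ hlam₀ k n hn) (le_of_lt hc₀₁)
    have hub₁ : ∀ n : ℕ, n ≤ k + 2 → |b₁ n| ≤ c₁₁ * ((3:ℝ) ^ lam₁ * P₁) := by
      intro n hn
      refine (hb₁bound n).2.trans ?_
      exact mul_le_mul_of_nonneg_left (rpow_three lam₁ hlam₁ k n hn) (le_of_lt hc₁₁)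
    have hprod : ∀ (n m : ℕ), n ≤ k+2 → m ≤ k+2 →
        |b₀ n * b₁ m| ≤ c₀₁ * ((3:ℝ) ^ lam₀ * P₀) * (c₁₁ * ((3:ℝ) ^ lam₁ * P₁)) := by
      intro n m hn hm
      rw [abs_mul]
      exact mul_le_mul (hub₀ n hn) (hub₁ m hm) (abs_nonneg _) (by positivity)
    have hdlow : c₀₀ * P₀ * (c₁₀ * P₁) ≤ |d k| := by
      refine le_trans ?_ (habsd k)
      have hl₀ : c₀₀ * P₀ ≤ |b₀ (k+1)| := by
        refine le_trans ?_ (hb₀bound (k+1)).1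
        exact mul_le_mul_of_nonneg_left (rpow_mono' lam₀ hlam₀ k (k+1) (by omega)) (le_of_lt hc₀₀)
      have hl₁ : c₁₀ * P₁ ≤ |b₁ (k+2)| := by
        refine le_trans ?_ (hb₁bound (k+2)).1
        exact mul_le_mul_of_nonneg_left (rpow_mono' lam₁ hlam₁ k (k+2) (by omega)) (le_of_lt hc₁₀)
      exact mul_le_mul hl₀ hl₁ (by positivity) (abs_nonneg _)
    have hMeq : M * (c₀₀ * P₀ * (c₁₀ * P₁)) =
        2 * (c₀₁ * ((3:ℝ) ^ lam₀ * P₀) * (c₁₁ * ((3:ℝ) ^ lam₁ * P₁))) := by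
      rw [hM_def]
      field_simp
    calc |b₀ n₀ * b₁ n₁ - b₀ m₀ * b₁ m₁|
        ≤ |b₀ n₀ * b₁ n₁| + |b₀ m₀ * b₁ m₁| := by
          rw [sub_eq_add_neg]
          exact (abs_add_le _ _).trans (by rw [abs_neg])
      _ ≤ 2 * (c₀₁ * ((3:ℝ) ^ lam₀ * P₀) * (c₁₁ * ((3:ℝ) ^ lam₁ * P₁))) := by
          have := hprod n₀ n₁ hn₀ hn₁
          have := hprod m₀ m₁ hm₀ hm₁
          linarith
      _ = M * (c₀₀ * P₀ * (c₁₀ * P₁)) := hMeq.symm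
      _ ≤ M * |d k| := mul_le_mul_of_nonneg_left hdlow hM
  refine ⟨hdet, ⟨_, hexists, fun B hB => huniq B _ hB hexists⟩, ?_⟩
  -- boundedness
  intro A hA
  have hA1 : ∀ k, |A (k + 1) k| ≤ M := by
    intro k
    rw [(hentry A hA k).1, abs_div, div_le_iff₀ (abs_pos.mpr (hdet k))]
    exact hbound k (k+2) k k (k+2) (by omega) (by omega) (by omega) (by omega)
  have hA2 : ∀ k, |A (k + 2) k| ≤ M := by
    intro k
    rw [(hentry A hA k).2, abs_div, div_le_iff₀ (abs_pos.mpr (hdet k))]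
    exact hbound k k (k+1) (k+1) k (by omega) (by omega) (by omega) (by omega)
  refine ⟨1 + M + M, ?_⟩
  intro x hx
  obtain ⟨N₀, hN₀⟩ := hx.bddAbove
  have hxz : ∀ n, N₀ + 1 ≤ n → x n = 0 := by
    intro n hn
    by_contra h
    have h1 : n ∈ Function.support x := h
    have := hN₀ h1
    omega
  set N := N₀ + 1 with hN_def
  set A' : ℕ → ℕ → ℝ := fun i j => A (i + 1) j with hA'_def
  set y₂ : ℕ → ℝ := fun n => if n = 0 then (0:ℝ) else shift1 A' x (n - 1) with hy₂_def
  have hdecomp : applyMat A x = fun i => x i + shift1 A x i + y₂ i := by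
    funext i
    have hsupp : ∀ j ∉ Finset.range (i+1), A i j * x j = 0 := by
      intro j hj
      rw [hA.2.1 i j (Or.inl (by simpa using hj)), zero_mul]
    show ∑' j, A i j * x j = _
    rw [tsum_eq_sum hsupp]
    match i with
    | 0 => simp [shift1, hy₂_def, hA.1 0]
    | 1 =>
      rw [Finset.sum_range_succ, Finset.sum_range_succ, Finset.sum_range_zero]
      simp [shift1, hy₂_def, hA.1 1]
      ring
    | (k+2) =>
      rw [Finset.sum_range_succ, Finset.sum_range_succ, Finset.sum_range_succ,
        Finset.sum_eq_zero (fun j hj => by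
          rw [hA.2.1 (k+2) j (Or.inr (by simp at hj; omega)), zero_mul])]
      have e1 : shift1 A x (k+2) = A (k+2) (k+1) * x (k+1) := by
        simp [shift1]
      have e2 : y₂ (k+2) = A (k+2) k * x k := by
        simp only [hy₂_def]
        simp [shift1, hA'_def]
      rw [e1, e2, hA.1 (k+2)]
      ring
  have hxz' : ∀ n, N ≤ n → x n = 0 := fun n hn => hxz n hn
  have hs1 : ∀ n, N + 1 ≤ n → shift1 A x n = 0 := by
    intro n hn
    have h0 : n ≠ 0 := by omega
    simp only [shift1, if_neg h0]
    rw [hxz (n-1) (by omega), mul_zero]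
  have hs2 : ∀ n, N + 2 ≤ n → y₂ n = 0 := by
    intro n hn
    have h0 : n ≠ 0 := by omega
    simp only [hy₂_def, if_neg h0]
    have h1 : n - 1 ≠ 0 := by omega
    simp only [shift1, if_neg h1]
    rw [hxz (n-1-1) (by omega), mul_zero]
  have step1 : l2norm (applyMat A x) ≤
      l2norm (fun n => x n + shift1 A x n) + l2norm y₂ := by
    rw [hdecomp]
    exact l2norm_add_le (fun n => x n + shift1 A x n) y₂ (N+2)
      (fun n hn => by show x n + shift1 A x n = 0; rw [hxz' n (by omega), hs1 n (by omega)]; ring)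
      (fun n hn => hs2 n hn)
  have step2 : l2norm (fun n => x n + shift1 A x n) ≤ l2norm x + l2norm (shift1 A x) :=
    l2norm_add_le x (shift1 A x) (N+2)
      (fun n hn => hxz' n (by omega)) (fun n hn => hs1 n (by omega))
  have step3 : l2norm (shift1 A x) ≤ M * l2norm x :=
    l2norm_shift1_le A x M hM hA1 N hxz'
  have hs1' : ∀ n, N + 1 ≤ n → shift1 A' x n = 0 := by
    intro n hn
    have h0 : n ≠ 0 := by omega
    simp only [shift1, if_neg h0]
    rw [hxz (n-1) (by omega), mul_zero]
  have step4 : l2norm y₂ ≤ M * l2norm x := by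
    rw [hy₂_def, l2norm_pureShift (shift1 A' x) (N+1) hs1']
    apply l2norm_shift1_le A' x M hM _ N hxz'
    intro k
    show |A (k + 1 + 1) k| ≤ M
    exact hA2 k
  have hl2x : 0 ≤ l2norm x := Real.sqrt_nonneg _
  calc l2norm (applyMat A x)
      ≤ l2norm x + l2norm (shift1 A x) + l2norm y₂ := by linarith
    _ ≤ (1 + M + M) * l2norm x := by nlinarith
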